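/- Let S : ℝᵐ × ℝⁿ → ℝ be C² and r ∈ ℝ. Along any solution of ẋ = -∇ₓS, ẏ = ∇_y S, the function L(t) = (1/2)‖∇ₓS(x(t),y(t))‖² + (1/2)‖∇_y S(x(t),y(t))‖² - r·S(x(t),y(t)) satisfies dL/dt = -⟪ẋ, (Hₓₓ - rI)ẋ⟫ + ⟪ẏ, (H_yy - rI)ẏ⟫. -/

import Mathlib

open scoped RealInnerProductSpace
open InnerProductSpace ContinuousLinearMap

/-- Partial gradient of `S` with respect to the first (descent) variable. -/
noncomputable def gradX {m n : ℕ}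
    (S : EuclideanSpace ℝ (Fin m) × EuclideanSpace ℝ (Fin n) → ℝ)
    (p : EuclideanSpace ℝ (Fin m) × EuclideanSpace ℝ (Fin n)) : EuclideanSpace ℝ (Fin m) :=
  gradient (fun x => S (x, p.2)) p.1

/-- Partial gradient of `S` with respect to the second (ascent) variable. -/
noncomputable def gradY {m n : ℕ}
    (S : EuclideanSpace ℝ (Fin m) × EuclideanSpace ℝ (Fin n) → ℝ)
    (p : EuclideanSpace ℝ (Fin m) × EuclideanSpace ℝ (Fin n)) : EuclideanSpace ℝ (Fin n) :=
  gradient (fun y => S (p.1, y)) p.2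

/-- Partial Hessian of `S` in the first variable, as a continuous linear map. -/
noncomputable def hessXX {m n : ℕ}
    (S : EuclideanSpace ℝ (Fin m) × EuclideanSpace ℝ (Fin n) → ℝ)
    (p : EuclideanSpace ℝ (Fin m) × EuclideanSpace ℝ (Fin n)) :
    EuclideanSpace ℝ (Fin m) →L[ℝ] EuclideanSpace ℝ (Fin m) :=
  fderiv ℝ (fun x => gradient (fun x' => S (x', p.2)) x) p.1

/-- Partial Hessian of `S` in the second variable, as a continuous linear map. -/
noncomputable def hessYY {m n : ℕ}
    (S : EuclideanSpace ℝ (Fin m) × EuclideanSpace ℝ (Fin n) → ℝ)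
    (p : EuclideanSpace ℝ (Fin m) × EuclideanSpace ℝ (Fin n)) :
    EuclideanSpace ℝ (Fin n) →L[ℝ] EuclideanSpace ℝ (Fin n) :=
  fderiv ℝ (fun y => gradient (fun y' => S (p.1, y')) y) p.2


noncomputable def dualIsoL (k : ℕ) :
    (EuclideanSpace ℝ (Fin k) →L[ℝ] ℝ) →L[ℝ] EuclideanSpace ℝ (Fin k) :=
  LinearMap.toContinuousLinearMap
    { toFun := fun A => (toDual ℝ (EuclideanSpace ℝ (Fin k))).symm A
      map_add' := fun A B => by simp
      map_smul' := fun r A => by simp }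

lemma dualIsoL_inner {k : ℕ} (A : EuclideanSpace ℝ (Fin k) →L[ℝ] ℝ)
    (w : EuclideanSpace ℝ (Fin k)) : ⟪w, dualIsoL k A⟫ = A w := by
  rw [real_inner_comm]
  simp [dualIsoL, InnerProductSpace.toDual_symm_apply]

noncomputable def TX (m n : ℕ) :
    ((EuclideanSpace ℝ (Fin m) × EuclideanSpace ℝ (Fin n)) →L[ℝ] ℝ) →L[ℝ]
      EuclideanSpace ℝ (Fin m) :=
  (dualIsoL m) ∘L
    ((compL ℝ (EuclideanSpace ℝ (Fin m))
        (EuclideanSpace ℝ (Fin m) × EuclideanSpace ℝ (Fin n)) ℝ).flip (inl ℝ _ _))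

noncomputable def TY (m n : ℕ) :
    ((EuclideanSpace ℝ (Fin m) × EuclideanSpace ℝ (Fin n)) →L[ℝ] ℝ) →L[ℝ]
      EuclideanSpace ℝ (Fin n) :=
  (dualIsoL n) ∘L
    ((compL ℝ (EuclideanSpace ℝ (Fin n))
        (EuclideanSpace ℝ (Fin m) × EuclideanSpace ℝ (Fin n)) ℝ).flip (inr ℝ _ _))

lemma TX_inner {m n : ℕ} (A : (EuclideanSpace ℝ (Fin m) × EuclideanSpace ℝ (Fin n)) →L[ℝ] ℝ)
    (w : EuclideanSpace ℝ (Fin m)) : ⟪w, TX m n A⟫ = A (w, 0) := by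
  simp only [TX, ContinuousLinearMap.comp_apply, ContinuousLinearMap.flip_apply,
    ContinuousLinearMap.compL_apply]
  rw [dualIsoL_inner]; simp

lemma TY_inner {m n : ℕ} (A : (EuclideanSpace ℝ (Fin m) × EuclideanSpace ℝ (Fin n)) →L[ℝ] ℝ)
    (w : EuclideanSpace ℝ (Fin n)) : ⟪w, TY m n A⟫ = A (0, w) := by
  simp only [TY, ContinuousLinearMap.comp_apply, ContinuousLinearMap.flip_apply,
    ContinuousLinearMap.compL_apply]
  rw [dualIsoL_inner]; simp

section Main
variable {m n : ℕ} {S : EuclideanSpace ℝ (Fin m) × EuclideanSpace ℝ (Fin n) → ℝ}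

lemma S_hasFDerivAt (hS : ContDiff ℝ 2 S) (p) : HasFDerivAt S (fderiv ℝ S p) p :=
  (hS.differentiable (by norm_num) p).hasFDerivAt

lemma fderiv_hasFDerivAt (hS : ContDiff ℝ 2 S) (p) :
    HasFDerivAt (fderiv ℝ S) (fderiv ℝ (fderiv ℝ S) p) p := by
  have h1 : ContDiff ℝ 1 (fderiv ℝ S) := hS.fderiv_right (by norm_num)
  exact (h1.differentiable (by norm_num) p).hasFDerivAt

lemma gradX_eq (hS : ContDiff ℝ 2 S) (p) : gradX S p = TX m n (fderiv ℝ S p) := by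
  have h1 : HasFDerivAt (fun x => S (x, p.2))
      ((fderiv ℝ S p).comp (ContinuousLinearMap.inl ℝ _ _)) p.1 :=
    (S_hasFDerivAt hS p).comp p.1 (hasFDerivAt_prodMk_left p.1 p.2)
  have h2 := h1.hasGradientAt.gradient
  rw [gradX, h2]
  simp [TX, dualIsoL]

lemma gradY_eq (hS : ContDiff ℝ 2 S) (p) : gradY S p = TY m n (fderiv ℝ S p) := by
  have h1 : HasFDerivAt (fun y => S (p.1, y))
      ((fderiv ℝ S p).comp (ContinuousLinearMap.inr ℝ _ _)) p.2 :=
    (S_hasFDerivAt hS p).comp p.2 (hasFDerivAt_prodMk_right p.1 p.2)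
  have h2 := h1.hasGradientAt.gradient
  rw [gradY, h2]
  simp [TY, dualIsoL]

lemma TXgrad_hasFDerivAt (hS : ContDiff ℝ 2 S) (p) :
    HasFDerivAt (fun q => TX m n (fderiv ℝ S q))
      ((TX m n).comp (fderiv ℝ (fderiv ℝ S) p)) p :=
  ((TX m n).hasFDerivAt).comp p (fderiv_hasFDerivAt hS p)

lemma TYgrad_hasFDerivAt (hS : ContDiff ℝ 2 S) (p) :
    HasFDerivAt (fun q => TY m n (fderiv ℝ S q))
      ((TY m n).comp (fderiv ℝ (fderiv ℝ S) p)) p :=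
  ((TY m n).hasFDerivAt).comp p (fderiv_hasFDerivAt hS p)

lemma hessXX_apply (hS : ContDiff ℝ 2 S) (p) (u) :
    hessXX S p u = TX m n (fderiv ℝ (fderiv ℝ S) p (u, 0)) := by
  have hfun : (fun x => gradient (fun x' => S (x', p.2)) x)
      = fun x => TX m n (fderiv ℝ S (x, p.2)) := by
    funext x; exact gradX_eq hS (x, p.2)
  have h1 : HasFDerivAt (fun x => TX m n (fderiv ℝ S (x, p.2)))
      (((TX m n).comp (fderiv ℝ (fderiv ℝ S) p)).comp
        (ContinuousLinearMap.inl ℝ _ _)) p.1 :=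
    (TXgrad_hasFDerivAt hS p).comp p.1 (f := fun e => (e, p.2)) (hasFDerivAt_prodMk_left p.1 p.2)
  rw [hessXX, hfun, h1.fderiv]
  rfl

lemma hessYY_apply (hS : ContDiff ℝ 2 S) (p) (u) :
    hessYY S p u = TY m n (fderiv ℝ (fderiv ℝ S) p (0, u)) := by
  have hfun : (fun y => gradient (fun y' => S (p.1, y')) y)
      = fun y => TY m n (fderiv ℝ S (p.1, y)) := by
    funext y; exact gradY_eq hS (p.1, y)
  have h1 : HasFDerivAt (fun y => TY m n (fderiv ℝ S (p.1, y)))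
      (((TY m n).comp (fderiv ℝ (fderiv ℝ S) p)).comp
        (ContinuousLinearMap.inr ℝ _ _)) p.2 :=
    (TYgrad_hasFDerivAt hS p).comp p.2 (f := fun e => (p.1, e)) (hasFDerivAt_prodMk_right p.1 p.2)
  rw [hessYY, hfun, h1.fderiv]
  rfl

end Main

theorem energy_derivative_along_trajectory {m n : ℕ}
    (S : EuclideanSpace ℝ (Fin m) × EuclideanSpace ℝ (Fin n) → ℝ)
    (hS : ContDiff ℝ 2 S) (r : ℝ)
    (x : ℝ → EuclideanSpace ℝ (Fin m)) (y : ℝ → EuclideanSpace ℝ (Fin n))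
    (hx : ∀ t, HasDerivAt x (-(gradX S (x t, y t))) t)
    (hy : ∀ t, HasDerivAt y (gradY S (x t, y t)) t) :
    ∀ t, HasDerivAt
      (fun s => (1 / 2) * ‖gradX S (x s, y s)‖ ^ 2 + (1 / 2) * ‖gradY S (x s, y s)‖ ^ 2
        - r * S (x s, y s))
      (-(⟪-(gradX S (x t, y t)), hessXX S (x t, y t) (-(gradX S (x t, y t)))⟫
          - r * ‖-(gradX S (x t, y t))‖ ^ 2)
        + (⟪gradY S (x t, y t), hessYY S (x t, y t) (gradY S (x t, y t))⟫
          - r * ‖gradY S (x t, y t)‖ ^ 2)) t := by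
  intro t
  have hd := S_hasFDerivAt hS
  set p : EuclideanSpace ℝ (Fin m) × EuclideanSpace ℝ (Fin n) := (x t, y t) with hp
  set a := gradX S (x t, y t) with ha
  set b := gradY S (x t, y t) with hb
  have hsymm : ∀ v w, fderiv ℝ (fderiv ℝ S) p v w = fderiv ℝ (fderiv ℝ S) p w v :=
    second_derivative_symmetric (fun q => hd q) (fderiv_hasFDerivAt hS p)
  have hγ : HasDerivAt (fun s => (x s, y s)) ((-a, b)) t := (hx t).prodMk (hy t)
  have hGa : HasDerivAt (fun s => gradX S (x s, y s))
      (TX m n (fderiv ℝ (fderiv ℝ S) p (-a, b))) t := by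
    have h1 := (TXgrad_hasFDerivAt hS p).comp_hasDerivAt t hγ
    have h1' : HasDerivAt (fun s => TX m n (fderiv ℝ S (x s, y s)))
        (TX m n (fderiv ℝ (fderiv ℝ S) p (-a, b))) t := h1
    have hfun : (fun s => TX m n (fderiv ℝ S (x s, y s)))
        = fun s => gradX S (x s, y s) := by
      funext s; exact (gradX_eq hS _).symm
    rwa [hfun] at h1'
  have hGb : HasDerivAt (fun s => gradY S (x s, y s))
      (TY m n (fderiv ℝ (fderiv ℝ S) p (-a, b))) t := by
    have h1 := (TYgrad_hasFDerivAt hS p).comp_hasDerivAt t hγ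
    have h1' : HasDerivAt (fun s => TY m n (fderiv ℝ S (x s, y s)))
        (TY m n (fderiv ℝ (fderiv ℝ S) p (-a, b))) t := h1
    have hfun : (fun s => TY m n (fderiv ℝ S (x s, y s)))
        = fun s => gradY S (x s, y s) := by
      funext s; exact (gradY_eq hS _).symm
    rwa [hfun] at h1'
  have hSt : HasDerivAt (fun s => S (x s, y s)) (fderiv ℝ S p (-a, b)) t :=
    (hd p).comp_hasDerivAt t hγ
  have h1 := hGa.inner ℝ hGa
  have h2 := hGb.inner ℝ hGb
  have hL := (((h1.const_mul ((1:ℝ)/2)).add (h2.const_mul ((1:ℝ)/2))).sub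
    (hSt.const_mul r))
  have hfunL : (fun s => (1 / 2) * ‖gradX S (x s, y s)‖ ^ 2
        + (1 / 2) * ‖gradY S (x s, y s)‖ ^ 2 - r * S (x s, y s))
      = (fun s => (1/2) * ⟪gradX S (x s, y s), gradX S (x s, y s)⟫
        + (1/2) * ⟪gradY S (x s, y s), gradY S (x s, y s)⟫ - r * S (x s, y s)) := by
    funext s
    rw [real_inner_self_eq_norm_sq, real_inner_self_eq_norm_sq]
  rw [hfunL]
  convert hL using 1
  case e'_4 => rfl
  case e'_5 => rfl
  case e'_8 => rfl
  have hTX : TX m n (fderiv ℝ S p) = a := (gradX_eq hS (x t, y t)).symm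
  have hTY : TY m n (fderiv ℝ S p) = b := (gradY_eq hS (x t, y t)).symm
  have hv : ((-a, b) : EuclideanSpace ℝ (Fin m) × EuclideanSpace ℝ (Fin n))
      = -(a, 0) + (0, b) := by simp
  have hd2 : fderiv ℝ (fderiv ℝ S) p (-a, b)
      = -(fderiv ℝ (fderiv ℝ S) p (a, 0)) + fderiv ℝ (fderiv ℝ S) p (0, b) := by
    rw [hv, map_add, map_neg]
  have hm : ((-a, (0 : EuclideanSpace ℝ (Fin n)))
      : EuclideanSpace ℝ (Fin m) × EuclideanSpace ℝ (Fin n)) = -(a, 0) := by simp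
  have e1 : ⟪-a, hessXX S p (-a)⟫ = fderiv ℝ (fderiv ℝ S) p (a, 0) (a, 0) := by
    rw [hessXX_apply hS, TX_inner, hm, map_neg, map_neg,
      ContinuousLinearMap.neg_apply, neg_neg]
  have e2 : ⟪b, hessYY S p b⟫ = fderiv ℝ (fderiv ℝ S) p (0, b) (0, b) := by
    rw [hessYY_apply hS, TY_inner]
  have e3 : ⟪TX m n (fderiv ℝ (fderiv ℝ S) p (-a, b)), a⟫
      = -(fderiv ℝ (fderiv ℝ S) p (a, 0) (a, 0))
        + fderiv ℝ (fderiv ℝ S) p (a, 0) (0, b) := by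
    rw [real_inner_comm, TX_inner, hd2, ContinuousLinearMap.add_apply,
      ContinuousLinearMap.neg_apply, hsymm (0, b) (a, 0)]
  have e4 : ⟪TY m n (fderiv ℝ (fderiv ℝ S) p (-a, b)), b⟫
      = -(fderiv ℝ (fderiv ℝ S) p (a, 0) (0, b))
        + fderiv ℝ (fderiv ℝ S) p (0, b) (0, b) := by
    rw [real_inner_comm, TY_inner, hd2, ContinuousLinearMap.add_apply,
      ContinuousLinearMap.neg_apply]
  have hva : fderiv ℝ S p (a, 0) = ‖a‖ ^ 2 := by
    rw [← TX_inner, hTX, real_inner_self_eq_norm_sq]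
  have hvb : fderiv ℝ S p (0, b) = ‖b‖ ^ 2 := by
    rw [← TY_inner, hTY, real_inner_self_eq_norm_sq]
  have e5 : fderiv ℝ S p (-a, b) = -‖a‖ ^ 2 + ‖b‖ ^ 2 := by
    rw [hv, map_add, map_neg, hva, hvb]
  rw [real_inner_comm (TX m n (fderiv ℝ (fderiv ℝ S) p (-a, b))) a,
    real_inner_comm (TY m n (fderiv ℝ (fderiv ℝ S) p (-a, b))) b,
    e1, e2]
  rw [e3, e4, e5, norm_neg]
  ring
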